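/- Let N ≥ 1, let A be an N×N real symmetric matrix with nonnegative entries and largest eigenvalue μ_max(A), let λ > 0 with λ·μ_max(A) ≤ 1, and let φ_i : ℝ → ℝ (i = 1,…,N) be functions with 0 < φ_i(t) ≤ 1 for all t. Suppose ρ : ℝ → ℝ^N is differentiable, satisfies 0 ≤ ρ_i(t) ≤ 1 for all i and all t ≥ 0, and solves ρ̇_i(t) = −ρ_i(t) + λφ_i(t)(1−ρ_i(t))·Σ_j a_ij ρ_j(t) for all i and t ≥ 0. Then the Lyapunov function V(t) = (1/2)·Σ_{i=1}^N ρ_i(t)² is nonincreasing on [0,∞). -/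

import Mathlib

open Matrix Finset
open scoped RealInnerProductSpace

theorem quad_bound (N : ℕ) (A : Matrix (Fin N) (Fin N) ℝ) (hA : A.IsHermitian)
    (hNe : (Finset.univ : Finset (Fin N)).Nonempty) (x : Fin N → ℝ) :
    x ⬝ᵥ (A *ᵥ x) ≤ (Finset.univ.sup' hNe hA.eigenvalues) * (x ⬝ᵥ x) := by
  set M := Finset.univ.sup' hNe hA.eigenvalues with hM
  set B := hA.eigenvectorBasis with hB
  set x' : EuclideanSpace ℝ (Fin N) := (WithLp.equiv 2 (Fin N → ℝ)).symm x with hx'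
  have hx'app : ∀ i, x' i = x i := fun i => rfl
  have hinner : ∀ (u v : EuclideanSpace ℝ (Fin N)),
      ⟪u, v⟫ = (fun i => u i) ⬝ᵥ (fun i => v i) := by
    intro u v
    simp [PiLp.inner_apply, dotProduct, mul_comm]
  have hAx : ∀ (u : EuclideanSpace ℝ (Fin N)),
      ⟪u, ((WithLp.equiv 2 (Fin N → ℝ)).symm (A *ᵥ (fun i => u i)))⟫
        = (fun i => u i) ⬝ᵥ (A *ᵥ (fun i => u i)) := by
    intro u; rw [hinner]; rfl
  have key : x ⬝ᵥ (A *ᵥ x) = ∑ j, hA.eigenvalues j * (⟪x', B j⟫)^2 := by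
    have h1 := B.sum_inner_mul_inner x' ((WithLp.equiv 2 (Fin N → ℝ)).symm (A *ᵥ x))
    have h1' : ∑ i, ⟪x', B i⟫ * ⟪B i, (WithLp.equiv 2 (Fin N → ℝ)).symm (A *ᵥ x)⟫
        = x ⬝ᵥ (A *ᵥ x) := by
      rw [h1, hinner]; rfl
    rw [← h1']
    refine Finset.sum_congr rfl fun j _ => ?_
    have h2 : ⟪B j, (WithLp.equiv 2 (Fin N → ℝ)).symm (A *ᵥ x)⟫
        = hA.eigenvalues j * ⟪x', B j⟫ := by
      rw [hinner, hinner]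
      have h3 : (fun i => B j i) ⬝ᵥ (A *ᵥ x)
          = (A *ᵥ (fun i => B j i)) ⬝ᵥ x := by
        rw [dotProduct_mulVec, ← mulVec_transpose]
        have hsym : Aᵀ = A := by
          ext i k
          have := congrFun (congrFun hA.eq i) k
          simpa [Matrix.conjTranspose_apply] using this
        rw [hsym]
      have h4 : A *ᵥ (fun i => (B j) i) = hA.eigenvalues j • (fun i => (B j) i) := by
        exact hA.mulVec_eigenvectorBasis j
      have : (fun i => (B j : EuclideanSpace ℝ (Fin N)) i) ⬝ᵥ (fun i => ((WithLp.equiv 2 (Fin N → ℝ)).symm (A *ᵥ x)) i)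
          = (fun i => B j i) ⬝ᵥ (A *ᵥ x) := rfl
      rw [this, h3, h4, smul_dotProduct]
      simp [dotProduct, hx'app, mul_comm]
    rw [h2]; ring
  have keyx : (x ⬝ᵥ x) = ∑ j, (⟪x', B j⟫)^2 := by
    have h1 := B.sum_inner_mul_inner x' x'
    have h1' : ∑ i, ⟪x', B i⟫ * ⟪B i, x'⟫ = x ⬝ᵥ x := by
      rw [h1, hinner]; rfl
    rw [← h1']
    refine Finset.sum_congr rfl fun j _ => ?_
    rw [real_inner_comm (B j)]; ring
  rw [key, keyx, Finset.mul_sum]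
  refine Finset.sum_le_sum fun j _ => ?_
  exact mul_le_mul_of_nonneg_right (Finset.le_sup' _ (Finset.mem_univ j)) (sq_nonneg _)

/-- Theorem 2 (Lyapunov monotonicity): along any solution of the SIS system with awareness
factors in `(0,1]`, if `λ μ_max(A) ≤ 1` then `V(t) = (1/2) Σ_i ρ_i(t)²` is nonincreasing on
`[0,∞)`. -/
theorem lyapunov_nonincreasing
    (N : ℕ) (hN : 1 ≤ N) (A : Matrix (Fin N) (Fin N) ℝ)
    (hA : A.IsHermitian) (hApos : ∀ i j, 0 ≤ A i j)
    (lam : ℝ) (hlam : 0 < lam)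
    (hthr : lam * Finset.univ.sup' (Finset.univ_nonempty_iff.mpr ⟨⟨0, hN⟩⟩) hA.eigenvalues ≤ 1)
    (φ : Fin N → ℝ → ℝ) (hφ : ∀ i t, 0 < φ i t ∧ φ i t ≤ 1)
    (ρ : ℝ → Fin N → ℝ) (hdiff : ∀ i, Differentiable ℝ (fun t => ρ t i))
    (hrange : ∀ i t, 0 ≤ t → 0 ≤ ρ t i ∧ ρ t i ≤ 1)
    (hode : ∀ i t, 0 ≤ t →
      deriv (fun s => ρ s i) t =
        -ρ t i + lam * φ i t * (1 - ρ t i) * ∑ j, A i j * ρ t j) :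
    AntitoneOn (fun t => (1 / 2 : ℝ) * ∑ i, ρ t i ^ 2) (Set.Ici 0) := by
  set hNe : (Finset.univ : Finset (Fin N)).Nonempty := Finset.univ_nonempty_iff.mpr ⟨⟨0, hN⟩⟩
  set M := Finset.univ.sup' hNe hA.eigenvalues with hM
  set f : ℝ → ℝ := fun t => (1 / 2 : ℝ) * ∑ i, ρ t i ^ 2 with hf
  have hfd : ∀ t, HasDerivAt f (∑ i, ρ t i * deriv (fun s => ρ s i) t) t := by
    intro t
    have h1 : HasDerivAt (fun s => ∑ i, ρ s i ^ 2)
        (∑ i, 2 * ρ t i * deriv (fun s => ρ s i) t) t := by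
      refine HasDerivAt.fun_sum fun i _ => ?_
      have := ((hdiff i).differentiableAt (x := t)).hasDerivAt
      have h2 := this.fun_pow 2
      simpa [mul_comm, mul_assoc, mul_left_comm] using h2
    have h3 := h1.const_mul (1 / 2 : ℝ)
    have heq : (1 / 2 : ℝ) * ∑ i, 2 * ρ t i * deriv (fun s => ρ s i) t
        = ∑ i, ρ t i * deriv (fun s => ρ s i) t := by
      rw [Finset.mul_sum]; refine Finset.sum_congr rfl fun i _ => by ring
    rw [heq] at h3
    exact h3
  refine antitoneOn_of_deriv_nonpos (convex_Ici 0) ?_ ?_ ?_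
  · exact fun t _ => ((hfd t).continuousAt).continuousWithinAt
  · intro t ht
    exact ((hfd t).differentiableAt).differentiableWithinAt
  · intro t ht
    rw [interior_Ici] at ht
    have ht0 : (0:ℝ) ≤ t := le_of_lt ht
    rw [(hfd t).deriv]
    set x : Fin N → ℝ := ρ t with hx
    have hsum : ∀ i, 0 ≤ ∑ j, A i j * x j := fun i =>
      Finset.sum_nonneg fun j _ => mul_nonneg (hApos i j) (hrange j t ht0).1
    have hterm : ∀ i, x i * deriv (fun s => ρ s i) t ≤ -(x i)^2 + lam * (x i * ∑ j, A i j * x j) := by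
      intro i
      rw [hode i t ht0]
      have hxi := (hrange i t ht0).1
      have hφi := hφ i t
      have h1ρ : 1 - ρ t i ≤ 1 := by linarith [(hrange i t ht0).1]
      have h1ρ0 : 0 ≤ 1 - ρ t i := by linarith [(hrange i t ht0).2]
      have hb : lam * φ i t * (1 - ρ t i) * (∑ j, A i j * x j) ≤ lam * (∑ j, A i j * x j) := by
        have h0 : φ i t * (1 - ρ t i) ≤ 1 := mul_le_one₀ hφi.2 h1ρ0 h1ρ
        have : lam * φ i t * (1 - ρ t i) ≤ lam := by
          have := mul_le_mul_of_nonneg_left h0 hlam.le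
          nlinarith
        exact mul_le_mul_of_nonneg_right this (hsum i)
      have := mul_le_mul_of_nonneg_left hb hxi
      nlinarith [this]
    have hquad := quad_bound N A hA hNe x
    have hdot : x ⬝ᵥ (A *ᵥ x) = ∑ i, x i * ∑ j, A i j * x j := by
      simp [dotProduct, Matrix.mulVec, dotProduct]
    have hxx : x ⬝ᵥ x = ∑ i, (x i)^2 := by
      simp [dotProduct, sq]
    have hxx0 : 0 ≤ x ⬝ᵥ x := by rw [hxx]; exact Finset.sum_nonneg fun i _ => sq_nonneg _
    calc ∑ i, x i * deriv (fun s => ρ s i) t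
        ≤ ∑ i, (-(x i)^2 + lam * (x i * ∑ j, A i j * x j)) :=
          Finset.sum_le_sum fun i _ => hterm i
      _ = -(x ⬝ᵥ x) + lam * (x ⬝ᵥ (A *ᵥ x)) := by
          rw [Finset.sum_add_distrib, ← Finset.mul_sum, hdot, hxx, ← Finset.sum_neg_distrib]
      _ ≤ -(x ⬝ᵥ x) + lam * (M * (x ⬝ᵥ x)) := by
          have := mul_le_mul_of_nonneg_left hquad hlam.le
          linarith
      _ = (lam * M - 1) * (x ⬝ᵥ x) := by ring
      _ ≤ 0 := mul_nonpos_of_nonpos_of_nonneg (by linarith) hxx0
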